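/- If X is equal-volume and Ū is a transversal vector field along X that is both parallel and unimodular, then Ū = U + c·X for some constant c, where U(i) = X''(i) + λ(i)X(i) is the canonical parallel unimodular field. -/

import Mathlib

noncomputable def det3 (a b c : Fin 3 → ℝ) : ℝ := Matrix.det (Matrix.of ![a, b, c])

lemma det3_expand (a b c : Fin 3 → ℝ) :
    det3 a b c = a 0 * (b 1 * c 2 - b 2 * c 1) - a 1 * (b 0 * c 2 - b 2 * c 0)
      + a 2 * (b 0 * c 1 - b 1 * c 0) := by
  simp [det3, Matrix.det_fin_three]
  ring

lemma cramer3 (a b c v : Fin 3 → ℝ) (h : det3 a b c = 1) :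
    v = det3 v b c • a + det3 a v c • b + det3 a b v • c := by
  rw [det3_expand] at h
  funext i
  fin_cases i <;>
    simp only [Pi.add_apply, Pi.smul_apply, smul_eq_mul, det3_expand, Fin.isValue,
      Fin.mk_zero, Fin.mk_one, show (⟨2, by norm_num⟩ : Fin 3) = 2 from rfl] <;>
    [linear_combination (-(v 0)) * h; linear_combination (-(v 1)) * h;
      linear_combination (-(v 2)) * h]

lemma det3_sub_third (a b u v : Fin 3 → ℝ) :
    det3 a b (u - v) = det3 a b u - det3 a b v := by
  simp only [det3_expand, Pi.sub_apply]; ring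

lemma det3_smul_third (a b u : Fin 3 → ℝ) (x : ℝ) :
    det3 a b (x • u) = x * det3 a b u := by
  simp only [det3_expand, Pi.smul_apply, smul_eq_mul]; ring

lemma det3_abb (a b : Fin 3 → ℝ) : det3 a b b = 0 := by
  simp only [det3_expand]; ring

lemma det3_aba (a b : Fin 3 → ℝ) : det3 a b a = 0 := by
  simp only [det3_expand]; ring

/-- any parallel unimodular transversal field along an equal-volume polygon
differs from the canonical one by a constant multiple of X. -/
theorem parallel_unimodular_unique_up_to_cX
    (X U Ub : ℤ → Fin 3 → ℝ)
    (hev : ∀ j, det3 (X (j - 1)) (X j) (X (j + 1)) = 1)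
    (hUuni : ∀ j, det3 (X j) (X (j + 1)) (U j) = 1)
    (hUpar : ∀ j, ∃ s : ℝ, U (j + 1) - U j = s • (X (j + 1) - X j))
    (hUbuni : ∀ j, det3 (X j) (X (j + 1)) (Ub j) = 1)
    (hUbpar : ∀ j, ∃ s : ℝ, Ub (j + 1) - Ub j = s • (X (j + 1) - X j)) :
    ∃ c : ℝ, ∀ i, Ub i - U i = c • X i := by
  set D : ℤ → Fin 3 → ℝ := fun j => Ub j - U j with hDdef
  -- D is det-orthogonal to the pair (X j, X (j+1))
  have h1 : ∀ j, det3 (X j) (X (j + 1)) (D j) = 0 := by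
    intro j
    have : D j = Ub j - U j := rfl
    rw [this, det3_sub_third, hUbuni j, hUuni j, sub_self]
  -- D is parallel
  have hDpar : ∀ j, ∃ s : ℝ, D (j + 1) - D j = s • (X (j + 1) - X j) := by
    intro j
    obtain ⟨s1, hs1⟩ := hUbpar j
    obtain ⟨s2, hs2⟩ := hUpar j
    refine ⟨s1 - s2, ?_⟩
    have : D (j + 1) - D j = (Ub (j + 1) - Ub j) - (U (j + 1) - U j) := by
      show (Ub (j+1) - U (j+1)) - (Ub j - U j) = _
      abel
    rw [this, hs1, hs2, sub_smul]
  -- D is also det-orthogonal to the pair (X (j-1), X j)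
  have h2 : ∀ j, det3 (X (j - 1)) (X j) (D j) = 0 := by
    intro j
    obtain ⟨s, hs⟩ := hDpar (j - 1)
    have hj : j - 1 + 1 = j := by ring
    rw [hj] at hs
    have hD' : D j = D (j - 1) + s • (X j - X (j - 1)) := by
      rw [← hs]; abel
    have h0 := h1 (j - 1); rw [hj] at h0
    rw [hD']
    have : det3 (X (j-1)) (X j) (D (j-1) + s • (X j - X (j-1)))
        = det3 (X (j-1)) (X j) (D (j-1)) + s * det3 (X (j-1)) (X j) (X j - X (j-1)) := by
      have := det3_sub_third (X (j-1)) (X j) (D (j-1) + s • (X j - X (j-1))) (s • (X j - X (j-1)))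
      simp only [add_sub_cancel_right] at this
      rw [det3_smul_third] at this
      linarith
    rw [this, h0, det3_sub_third, det3_abb, det3_aba]
    ring
  -- the coefficient function
  set c : ℤ → ℝ := fun j => det3 (X (j - 1)) (D j) (X (j + 1)) with hcdef
  -- D j is a multiple of X j
  have h3 : ∀ j, D j = c j • X j := by
    intro j
    have hc := cramer3 (X (j - 1)) (X j) (X (j + 1)) (D j) (hev j)
    have hA : det3 (D j) (X j) (X (j + 1)) = 0 := by
      have h0 := h1 j
      rw [det3_expand] at h0 ⊢
      linear_combination h0
    rw [hA, h2 j, zero_smul, zero_smul, zero_add, add_zero] at hc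
    exact hc
  -- c is constant
  have h4 : ∀ j, c (j + 1) = c j := by
    intro j
    obtain ⟨s, hs⟩ := hDpar j
    rw [h3 (j + 1), h3 j] at hs
    -- key determinant values
    have hd1 : det3 (X (j + 2)) (X j) (X (j + 1)) = 1 := by
      have h0 := hev (j + 1)
      have e1 : j + 1 - 1 = j := by ring
      have e2 : j + 1 + 1 = j + 2 := by ring
      rw [e1, e2] at h0
      rw [det3_expand] at h0 ⊢
      linear_combination h0
    have hd2 : det3 (X (j + 1)) (X (j - 1)) (X j) = 1 := by
      have h0 := hev j
      rw [det3_expand] at h0 ⊢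
      linear_combination h0
    -- apply det3 (X (j+2)) (X j) to both sides of hs : c(j+1)•X(j+1) - c j•X j = s•(X(j+1)-X j)
    have key1 : c (j + 1) = s := by
      have := congrArg (det3 (X (j + 2)) (X j)) hs
      rw [det3_sub_third, det3_smul_third, det3_smul_third, det3_smul_third,
        det3_sub_third, hd1, det3_abb] at this
      linarith
    have key2 : c j = s := by
      have := congrArg (det3 (X (j + 1)) (X (j - 1))) hs
      rw [det3_sub_third, det3_smul_third, det3_smul_third, det3_smul_third,
        det3_sub_third, hd2, det3_aba] at this
      linarith
    rw [key1, key2]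
  have h5 : ∀ i, c i = c 0 := by
    intro i
    induction i using Int.induction_on with
    | zero => rfl
    | succ k ih => rw [h4 (k : ℤ), ih]
    | pred k ih =>
      have := h4 (-(k : ℤ) - 1)
      have e : -(k : ℤ) - 1 + 1 = -(k : ℤ) := by ring
      rw [e] at this
      rw [← this]; exact ih
  refine ⟨c 0, fun i => ?_⟩
  have : D i = c 0 • X i := by rw [h3 i, h5 i]
  exact this
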